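/- arXiv:2408.12581 — 2 statements merged into one kernel-verified Lean document; each statement's English description precedes it below -/
import Mathlib

section
/- For each n, let R_n and S_{n,2},…,S_{n,J_n} be square-integrable real random variables on a probability space and let c_{n,2},…,c_{n,J_n} be nonnegative reals. Suppose there are constants 0 < v* ≤ w* < ∞ such that for all n and all j ≠ m: v* ≤ Var[S_{n,j}] ≤ w* and Cov(S_{n,j}, S_{n,m}) ≥ v*. If Var[R_n] → 0 and Σ_{j=2}^{J_n} c_{n,j} → 1 as n → ∞, then liminf_{n→∞} Var[R_n − Σ_{j=2}^{J_n} c_{n,j} S_{n,j}] ≥ v* > 0. (Asymptotic form of Theorem 1, part 1: the variance of the OLS mean estimator does not vanish, so the mean estimator is not consistent.) -/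
open MeasureTheory Finset Filter

/-- Cov(X, Y) := E[XY] − E[X]E[Y]. -/
noncomputable def cov {Ω : Type*} [MeasurableSpace Ω] (μ : Measure Ω) (X Y : Ω → ℝ) : ℝ :=
  (∫ ω, X ω * Y ω ∂μ) - (∫ ω, X ω ∂μ) * (∫ ω, Y ω ∂μ)

/-- Var[X] := Cov(X, X). -/
noncomputable def var {Ω : Type*} [MeasurableSpace Ω] (μ : Measure Ω) (X : Ω → ℝ) : ℝ :=
  cov μ X X

section Aux

variable {Ω : Type*} [MeasurableSpace Ω] {μ : Measure Ω} [IsProbabilityMeasure μ]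
  {X Y Z : Ω → ℝ}

lemma aux_integrable_mul (hX : MemLp X 2 μ) (hY : MemLp Y 2 μ) :
    Integrable (fun ω => X ω * Y ω) μ := by
  have h : MemLp (X • Y) 1 μ := hY.smul hX (hpqr := ⟨by simp [ENNReal.inv_two_add_inv_two]⟩)
  exact (h.integrable le_rfl : Integrable (fun ω => X ω * Y ω) μ)

lemma aux_cov_comm : cov μ X Y = cov μ Y X := by
  have h : (fun ω => X ω * Y ω) = fun ω => Y ω * X ω := by
    funext ω; ring
  simp only [cov, h]; ring

lemma aux_cov_add_right (hX : MemLp X 2 μ) (hY : MemLp Y 2 μ) (hZ : MemLp Z 2 μ) :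
    cov μ X (fun ω => Y ω + Z ω) = cov μ X Y + cov μ X Z := by
  have h1 := aux_integrable_mul hX hY
  have h2 := aux_integrable_mul hX hZ
  have e : (fun ω => X ω * (Y ω + Z ω)) = fun ω => X ω * Y ω + X ω * Z ω := by
    funext ω; ring
  simp only [cov, e]
  rw [integral_add h1 h2, integral_add (hY.integrable one_le_two) (hZ.integrable one_le_two)]
  ring

lemma aux_cov_smul_right (a : ℝ) :
    cov μ X (fun ω => a * Y ω) = a * cov μ X Y := by
  have e : (fun ω => X ω * (a * Y ω)) = fun ω => a * (X ω * Y ω) := by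
    funext ω; ring
  simp only [cov, e, integral_const_mul]
  ring

lemma aux_cov_sum_right {ι : Type*} (s : Finset ι) (f : ι → Ω → ℝ) (hX : MemLp X 2 μ)
    (hf : ∀ j ∈ s, MemLp (f j) 2 μ) :
    cov μ X (fun ω => ∑ j ∈ s, f j ω) = ∑ j ∈ s, cov μ X (f j) := by
  classical
  induction s using Finset.induction with
  | empty => simp [cov]
  | @insert a s ha ih =>
    have e : (fun ω => ∑ j ∈ insert a s, f j ω) = fun ω => f a ω + ∑ j ∈ s, f j ω := by
      funext ω; exact Finset.sum_insert ha
    rw [e, aux_cov_add_right hX (hf a (Finset.mem_insert_self a s))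
      (memLp_finset_sum s fun j hj => hf j (Finset.mem_insert_of_mem hj)),
      ih fun j hj => hf j (Finset.mem_insert_of_mem hj), Finset.sum_insert ha]

lemma aux_var_sub (hX : MemLp X 2 μ) (hY : MemLp Y 2 μ) :
    var μ (fun ω => X ω - Y ω) = var μ X - 2 * cov μ X Y + var μ Y := by
  have hXX := aux_integrable_mul hX hX
  have hXY := aux_integrable_mul hX hY
  have hYY := aux_integrable_mul hY hY
  have e : (fun ω => (X ω - Y ω) * (X ω - Y ω)) =
      fun ω => X ω * X ω - 2 * (X ω * Y ω) + Y ω * Y ω := by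
    funext ω; ring
  have hA : Integrable (fun ω => X ω * X ω - 2 * (X ω * Y ω)) μ := hXX.sub (hXY.const_mul 2)
  simp only [var, cov, e]
  rw [integral_add hA hYY, integral_sub hXX (hXY.const_mul 2),
    integral_const_mul, integral_sub (hX.integrable one_le_two) (hY.integrable one_le_two)]
  ring

lemma aux_cov_center (hX : MemLp X 2 μ) (hY : MemLp Y 2 μ) :
    cov μ X Y = ∫ ω, (X ω - ∫ x, X x ∂μ) * (Y ω - ∫ x, Y x ∂μ) ∂μ := by
  set a := ∫ x, X x ∂μ
  set b := ∫ x, Y x ∂μ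
  have hXY := aux_integrable_mul hX hY
  have hXi := hX.integrable one_le_two
  have hYi := hY.integrable one_le_two
  have e : (fun ω => (X ω - a) * (Y ω - b)) =
      fun ω => X ω * Y ω - b * X ω - a * Y ω + a * b := by
    funext ω; ring
  have hbX : Integrable (fun ω => b * X ω) μ := hXi.const_mul b
  have haY : Integrable (fun ω => a * Y ω) μ := hYi.const_mul a
  have h1 : Integrable (fun ω => X ω * Y ω - b * X ω) μ := hXY.sub hbX
  have h2 : Integrable (fun ω => X ω * Y ω - b * X ω - a * Y ω) μ := h1.sub haY
  rw [e, integral_add h2 (integrable_const _), integral_sub h1 haY,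
    integral_sub hXY hbX, integral_const_mul, integral_const_mul, integral_const]
  simp only [cov, measure_univ, ENNReal.toReal_one, smul_eq_mul, one_mul, probReal_univ, mul_one]
  ring

lemma aux_var_nonneg (hX : MemLp X 2 μ) : 0 ≤ var μ X := by
  rw [var, aux_cov_center hX hX]
  exact integral_nonneg fun ω => mul_self_nonneg _

lemma aux_cov_sq_le (hX : MemLp X 2 μ) (hY : MemLp Y 2 μ) :
    (cov μ X Y) ^ 2 ≤ var μ X * var μ Y := by
  have key : ∀ t : ℝ, 0 ≤ var μ Y * (t * t) + 2 * cov μ X Y * t + var μ X := by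
    intro t
    have hY' : MemLp (fun ω => (-t) * Y ω) 2 μ := hY.const_mul _
    have h0 : 0 ≤ var μ (fun ω => X ω - (-t) * Y ω) :=
      aux_var_nonneg (hX.sub hY')
    rw [aux_var_sub hX hY'] at h0
    have e1 : cov μ X (fun ω => (-t) * Y ω) = (-t) * cov μ X Y := aux_cov_smul_right _
    have e2 : var μ (fun ω => (-t) * Y ω) = t * t * var μ Y := by
      rw [var, aux_cov_smul_right, aux_cov_comm, aux_cov_smul_right]
      ring_nf
      rfl
    rw [e1, e2] at h0
    nlinarith [h0]
  have hd := discrim_le_zero key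
  rw [discrim] at hd
  nlinarith [hd]

lemma aux_abs_cov_le (hX : MemLp X 2 μ) (hY : MemLp Y 2 μ) :
    |cov μ X Y| ≤ Real.sqrt (var μ X * var μ Y) := by
  rw [← Real.sqrt_sq_eq_abs]
  exact Real.sqrt_le_sqrt (aux_cov_sq_le hX hY)

lemma aux_double_sum {ι : Type*} (I : Finset ι) (d : ι → ℝ) (v : ℝ) :
    v * (∑ j ∈ I, d j) ^ 2 = ∑ j ∈ I, ∑ m ∈ I, d j * (d m * v) := by
  rw [sq, Finset.sum_mul_sum, Finset.mul_sum]
  refine Finset.sum_congr rfl fun j _ => ?_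
  rw [Finset.mul_sum]
  exact Finset.sum_congr rfl fun m _ => by ring

end Aux

/-- Asymptotic form of Theorem 1, part 1: the variance of the OLS mean estimator
does not vanish. -/
theorem stmt1 {Ω : Type*} [MeasurableSpace Ω] (μ : Measure Ω) [IsProbabilityMeasure μ]
    (J : ℕ → ℕ) (R : ℕ → Ω → ℝ) (S : ℕ → ℕ → Ω → ℝ) (c : ℕ → ℕ → ℝ)
    (vstar wstar : ℝ)
    (hR : ∀ n, MemLp (R n) 2 μ)
    (hS : ∀ n, ∀ j ∈ Finset.Icc 2 (J n), MemLp (S n j) 2 μ)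
    (hc : ∀ n, ∀ j ∈ Finset.Icc 2 (J n), 0 ≤ c n j)
    (hv : 0 < vstar) (hvw : vstar ≤ wstar)
    (hvarlb : ∀ n, ∀ j ∈ Finset.Icc 2 (J n), vstar ≤ var μ (S n j))
    (hvarub : ∀ n, ∀ j ∈ Finset.Icc 2 (J n), var μ (S n j) ≤ wstar)
    (hcov : ∀ n, ∀ j ∈ Finset.Icc 2 (J n), ∀ m ∈ Finset.Icc 2 (J n), j ≠ m →
      vstar ≤ cov μ (S n j) (S n m))
    (hRvar : Tendsto (fun n => var μ (R n)) atTop (nhds 0))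
    (hcsum : Tendsto (fun n => ∑ j ∈ Finset.Icc 2 (J n), c n j) atTop (nhds 1)) :
    vstar ≤ liminf (fun n =>
      var μ (fun ω => R n ω - ∑ j ∈ Finset.Icc 2 (J n), c n j * S n j ω)) atTop := by
  classical
  have hw : 0 ≤ wstar := le_trans hv.le hvw
  -- notation
  set T : ℕ → Ω → ℝ := fun n ω => ∑ j ∈ Finset.Icc 2 (J n), c n j * S n j ω with hTdef
  have hT : ∀ n, MemLp (T n) 2 μ := fun n =>
    memLp_finset_sum _ fun j hj => (hS n j hj).const_mul _
  set s : ℕ → ℝ := fun n => ∑ j ∈ Finset.Icc 2 (J n), c n j with hsdef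
  have hs0 : ∀ n, 0 ≤ s n := fun n => Finset.sum_nonneg fun j hj => hc n j hj
  set a : ℕ → ℝ := fun n => var μ (R n) with hadef
  set t : ℕ → ℝ := fun n => var μ (T n) with htdef
  have ha0 : ∀ n, 0 ≤ a n := fun n => aux_var_nonneg (hR n)
  have ht0 : ∀ n, 0 ≤ t n := fun n => aux_var_nonneg (hT n)
  -- expansion of var T as double sum
  have hTexp : ∀ n, t n = ∑ j ∈ Finset.Icc 2 (J n), ∑ m ∈ Finset.Icc 2 (J n),
      c n j * (c n m * cov μ (S n j) (S n m)) := by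
    intro n
    have h1 : t n = ∑ j ∈ Finset.Icc 2 (J n), cov μ (T n) (fun ω => c n j * S n j ω) := by
      rw [htdef]
      exact aux_cov_sum_right _ _ (hT n) fun j hj => (hS n j hj).const_mul _
    rw [h1]
    refine Finset.sum_congr rfl fun j hj => ?_
    rw [aux_cov_smul_right, aux_cov_comm]
    have h2 : cov μ (S n j) (T n) = ∑ m ∈ Finset.Icc 2 (J n),
        cov μ (S n j) (fun ω => c n m * S n m ω) :=
      aux_cov_sum_right _ _ (hS n j hj) fun m hm => (hS n m hm).const_mul _
    rw [h2]
    rw [Finset.mul_sum]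
    exact Finset.sum_congr rfl fun m hm => by rw [aux_cov_smul_right]
  -- lower and upper bounds on each covariance
  have hcov_lb : ∀ n, ∀ j ∈ Finset.Icc 2 (J n), ∀ m ∈ Finset.Icc 2 (J n),
      vstar ≤ cov μ (S n j) (S n m) := by
    intro n j hj m hm
    by_cases h : j = m
    · subst h; exact hvarlb n j hj
    · exact hcov n j hj m hm h
  have hcov_ub : ∀ n, ∀ j ∈ Finset.Icc 2 (J n), ∀ m ∈ Finset.Icc 2 (J n),
      cov μ (S n j) (S n m) ≤ wstar := by
    intro n j hj m hm
    have h1 : |cov μ (S n j) (S n m)| ≤ Real.sqrt (var μ (S n j) * var μ (S n m)) :=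
      aux_abs_cov_le (hS n j hj) (hS n m hm)
    have h2 : var μ (S n j) * var μ (S n m) ≤ wstar * wstar := by
      have := hvarub n j hj
      have := hvarub n m hm
      have := (hv.trans_le (hvarlb n j hj)).le
      have := (hv.trans_le (hvarlb n m hm)).le
      nlinarith
    have h3 : Real.sqrt (var μ (S n j) * var μ (S n m)) ≤ wstar := by
      calc Real.sqrt (var μ (S n j) * var μ (S n m)) ≤ Real.sqrt (wstar * wstar) :=
            Real.sqrt_le_sqrt h2
        _ = wstar := Real.sqrt_mul_self hw
    exact (le_abs_self _).trans (h1.trans h3)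
  -- bounds on t n
  have htlb : ∀ n, vstar * (s n) ^ 2 ≤ t n := by
    intro n
    have hd : vstar * (s n) ^ 2 = ∑ j ∈ Finset.Icc 2 (J n), ∑ m ∈ Finset.Icc 2 (J n),
        c n j * (c n m * vstar) := aux_double_sum _ _ _
    rw [hTexp n, hd]
    refine Finset.sum_le_sum fun j hj => Finset.sum_le_sum fun m hm => ?_
    exact mul_le_mul_of_nonneg_left
      (mul_le_mul_of_nonneg_left (hcov_lb n j hj m hm) (hc n m hm)) (hc n j hj)
  have htub : ∀ n, t n ≤ wstar * (s n) ^ 2 := by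
    intro n
    have hd : wstar * (s n) ^ 2 = ∑ j ∈ Finset.Icc 2 (J n), ∑ m ∈ Finset.Icc 2 (J n),
        c n j * (c n m * wstar) := aux_double_sum _ _ _
    rw [hTexp n, hd]
    refine Finset.sum_le_sum fun j hj => Finset.sum_le_sum fun m hm => ?_
    exact mul_le_mul_of_nonneg_left
      (mul_le_mul_of_nonneg_left (hcov_ub n j hj m hm) (hc n m hm)) (hc n j hj)
  -- bound on sqrt (a n * t n)
  have hsq : ∀ n, Real.sqrt (a n * t n) ≤ Real.sqrt (a n) * (Real.sqrt wstar * s n) := by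
    intro n
    calc Real.sqrt (a n * t n) ≤ Real.sqrt (a n * (wstar * (s n) ^ 2)) :=
          Real.sqrt_le_sqrt (by nlinarith [htub n, ha0 n])
      _ = Real.sqrt (a n) * (Real.sqrt wstar * s n) := by
          rw [Real.sqrt_mul (ha0 n), Real.sqrt_mul hw, Real.sqrt_sq (hs0 n)]
  -- expansion of the objective
  set F : ℕ → ℝ := fun n =>
    var μ (fun ω => R n ω - ∑ j ∈ Finset.Icc 2 (J n), c n j * S n j ω) with hFdef
  have hFexp : ∀ n, F n = a n - 2 * cov μ (R n) (T n) + t n := fun n =>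
    aux_var_sub (hR n) (hT n)
  have hcovRT : ∀ n, |cov μ (R n) (T n)| ≤ Real.sqrt (a n * t n) := fun n =>
    aux_abs_cov_le (hR n) (hT n)
  -- lower sequence
  set g : ℕ → ℝ := fun n => vstar * (s n) ^ 2 - 2 * (Real.sqrt (a n) * (Real.sqrt wstar * s n))
    with hgdef
  have hgle : ∀ n, g n ≤ F n := by
    intro n
    have h1 := abs_le.mp (hcovRT n)
    have h2 := hsq n
    have := htlb n
    have := ha0 n
    rw [hFexp n, hgdef]
    dsimp only
    nlinarith
  -- upper bound sequence
  set h : ℕ → ℝ := fun n => a n + wstar * (s n) ^ 2 +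
    2 * (Real.sqrt (a n) * (Real.sqrt wstar * s n)) with hhdef
  have hFle : ∀ n, F n ≤ h n := by
    intro n
    have h1 := abs_le.mp (hcovRT n)
    have h2 := hsq n
    have := htub n
    rw [hFexp n, hhdef]
    dsimp only
    nlinarith
  -- limits
  have hsqrta : Tendsto (fun n => Real.sqrt (a n)) atTop (nhds 0) := by
    have := (Real.continuous_sqrt.tendsto 0).comp hRvar
    simpa [Function.comp_def] using this
  have hgT : Tendsto g atTop (nhds vstar) := by
    have h1 : Tendsto (fun n => vstar * (s n) ^ 2) atTop (nhds (vstar * 1 ^ 2)) :=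
      (tendsto_const_nhds.mul (hcsum.pow 2))
    have h2 : Tendsto (fun n => 2 * (Real.sqrt (a n) * (Real.sqrt wstar * s n))) atTop
        (nhds (2 * (0 * (Real.sqrt wstar * 1)))) :=
      tendsto_const_nhds.mul (hsqrta.mul (tendsto_const_nhds.mul hcsum))
    have := h1.sub h2
    simpa using this
  have hhT : Tendsto h atTop (nhds (0 + wstar * 1 ^ 2 + 2 * (0 * (Real.sqrt wstar * 1)))) := by
    exact (hRvar.add (tendsto_const_nhds.mul (hcsum.pow 2))).add
      (tendsto_const_nhds.mul (hsqrta.mul (tendsto_const_nhds.mul hcsum)))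
  have hhT' : Tendsto h atTop (nhds wstar) := by simpa using hhT
  -- F is eventually bounded above
  have hFbdd : IsBoundedUnder (· ≤ ·) atTop F := by
    have hev : ∀ᶠ n in atTop, F n ≤ wstar + 1 := by
      filter_upwards [hhT'.eventually (eventually_le_nhds (by linarith : wstar < wstar + 1))]
        with n hn
      exact (hFle n).trans hn
    exact ⟨wstar + 1, eventually_map.2 hev⟩
  have : liminf g atTop ≤ liminf F atTop :=
    liminf_le_liminf (Eventually.of_forall hgle) hgT.isBoundedUnder_ge
      hFbdd.isCoboundedUnder_ge
  calc vstar = liminf g atTop := (hgT.liminf_eq).symm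
    _ ≤ liminf F atTop := this
end

section
/- Let A be a real N × K matrix and B a real N × L matrix, and let X = [A B] be the N × (K+L) block matrix. Assume XᵀX is invertible, AᵀA is invertible, and Bᵀ(I_N − H_A)B is invertible, where H_A := A(AᵀA)⁻¹Aᵀ. Then for every r ∈ ℝ^N, the last L coordinates of the OLS solution (XᵀX)⁻¹ Xᵀ r equal (Bᵀ(I_N − H_A)B)⁻¹ Bᵀ(I_N − H_A) r. (This is the separated formula ŝ = (B′(I − H_A)B)⁻¹ B′(I − H_A) r for the shift estimator obtained by block matrix inversion in Section 3.1.) -/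
open Matrix

/-- Separated formula for the shift-estimator block of the OLS solution:
the last `L` coordinates of `(XᵀX)⁻¹Xᵀr` equal `(Bᵀ(I − H_A)B)⁻¹Bᵀ(I − H_A)r`. -/
theorem stmt13 (N K L : ℕ)
    (A : Matrix (Fin N) (Fin K) ℝ) (B : Matrix (Fin N) (Fin L) ℝ)
    (X : Matrix (Fin N) (Fin K ⊕ Fin L) ℝ) (hXdef : X = Matrix.fromCols A B)
    (HA : Matrix (Fin N) (Fin N) ℝ) (hHA : HA = A * (Aᵀ * A)⁻¹ * Aᵀ)
    (hX : IsUnit (Xᵀ * X).det) (hA : IsUnit (Aᵀ * A).det)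
    (hB : IsUnit (Bᵀ * (1 - HA) * B).det)
    (r : Fin N → ℝ) :
    ∀ j : Fin L, ((Xᵀ * X)⁻¹ * Xᵀ).mulVec r (Sum.inr j)
      = ((Bᵀ * (1 - HA) * B)⁻¹ * (Bᵀ * (1 - HA))).mulVec r j := by
  intro j
  obtain ⟨Q, hQ⟩ : ∃ Q' : Matrix (Fin L) (Fin N) ℝ,
      Q' = (Bᵀ * (1 - HA) * B)⁻¹ * (Bᵀ * (1 - HA)) := ⟨_, rfl⟩
  obtain ⟨P, hP⟩ : ∃ P' : Matrix (Fin K) (Fin N) ℝ,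
      P' = (Aᵀ * A)⁻¹ * (Aᵀ * (1 - B * Q)) := ⟨_, rfl⟩
  rw [← hQ]
  have h2 : Bᵀ * (1 - HA) * B * Q = Bᵀ * (1 - HA) := by
    rw [hQ, Matrix.mul_nonsing_inv_cancel_left _ _ hB]
  have h1 : Aᵀ * (A * P + B * Q) = Aᵀ := by
    rw [Matrix.mul_add, ← Matrix.mul_assoc, hP,
      Matrix.mul_nonsing_inv_cancel_left _ _ hA,
      Matrix.mul_sub, Matrix.mul_one, sub_add_cancel]
  have h3 : Bᵀ * (A * P + B * Q) = Bᵀ := by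
    rw [Matrix.mul_add, ← Matrix.mul_assoc, hP]
    have assoc : Bᵀ * A * ((Aᵀ * A)⁻¹ * (Aᵀ * (1 - B * Q)))
        = Bᵀ * (A * (Aᵀ * A)⁻¹ * Aᵀ) * (1 - B * Q) := by
      simp only [Matrix.mul_assoc]
    rw [assoc, ← hHA]
    have h2' : Bᵀ * (B * Q) - Bᵀ * HA * (B * Q) = Bᵀ - Bᵀ * HA := by
      have e : Bᵀ * (1 - HA) * B * Q = Bᵀ * (B * Q) - Bᵀ * HA * (B * Q) := by
        simp only [Matrix.sub_mul, Matrix.mul_sub, Matrix.mul_one, Matrix.one_mul,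
          Matrix.mul_assoc]
      rw [← e, h2, Matrix.mul_sub, Matrix.mul_one]
    calc Bᵀ * HA * (1 - B * Q) + Bᵀ * (B * Q)
        = Bᵀ * HA + (Bᵀ * (B * Q) - Bᵀ * HA * (B * Q)) := by
          rw [Matrix.mul_sub, Matrix.mul_one]; abel
      _ = Bᵀ * HA + (Bᵀ - Bᵀ * HA) := by rw [h2']
      _ = Bᵀ := by abel
  have key : (Xᵀ * X) * fromRows P Q = Xᵀ := by
    rw [hXdef, transpose_fromCols, Matrix.mul_assoc, fromCols_mul_fromRows,
      fromRows_mul, h1, h3]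
  have hinv : (Xᵀ * X)⁻¹ * Xᵀ = fromRows P Q := by
    nth_rewrite 2 [← key]
    rw [Matrix.nonsing_inv_mul_cancel_left _ _ hX]
  rw [hinv, fromRows_mulVec]
  rfl
end
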